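/- Let j : X → Y be a cofibration (a map having the left lifting property with respect to all Serre fibrations that are weak homotopy equivalences) between pointed compact Hausdorff spaces, and let Z be any pointed topological space. Then the precomposition map j* : C_*(Y,Z) → C_*(X,Z) between pointed mapping spaces with the compact-open topology is a Serre fibration. -/

import Mathlib

/-- The `n`-sphere, as the unit sphere in `ℝ^{n+1}`. -/
abbrev Sph (n : ℕ) : Type := Metric.sphere (0 : EuclideanSpace ℝ (Fin (n + 1))) 1

/-- A Serre fibration: a map with the homotopy lifting property with respect to all
cubes. -/
def IsSerreFibration {E B : Type*} [TopologicalSpace E] [TopologicalSpace B]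
    (p : E → B) : Prop :=
  ∀ (n : ℕ) (H : C((Fin n → unitInterval) × unitInterval, B))
    (g : C(Fin n → unitInterval, E)), (∀ x, p (g x) = H (x, 0)) →
    ∃ G : C((Fin n → unitInterval) × unitInterval, E),
      (∀ x, G (x, 0) = g x) ∧ ∀ y, p (G y) = H y

/-- A weak homotopy equivalence: a continuous map inducing a bijection on path
components and isomorphisms on all homotopy groups at every basepoint, formulated via
based maps from spheres. -/
def IsWeakHomotopyEquiv {X Y : Type*} [TopologicalSpace X] [TopologicalSpace Y]
    (f : C(X, Y)) : Prop :=
  (∀ y : Y, ∃ x : X, Joined (f x) y) ∧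
  (∀ x x' : X, Joined (f x) (f x') → Joined x x') ∧
  (∀ (n : ℕ) (s₀ : Sph n) (x : X),
    (∀ g : C(Sph n, Y), g s₀ = f x →
      ∃ h : C(Sph n, X), h s₀ = x ∧ (f.comp h).HomotopicRel g {s₀}) ∧
    (∀ h₁ h₂ : C(Sph n, X), h₁ s₀ = x → h₂ s₀ = x →
      (f.comp h₁).HomotopicRel (f.comp h₂) {s₀} → h₁.HomotopicRel h₂ {s₀}))

set_option maxHeartbeats 1000000

noncomputable section SerreAux

open Set unitInterval

namespace SerreAux

/-- Clamp a real number into the unit interval. -/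
def pr (r : ℝ) : unitInterval := Set.projIcc 0 1 zero_le_one r

@[fun_prop]
lemma continuous_pr : Continuous pr := continuous_projIcc (h := zero_le_one)

lemma pr_coe (s : unitInterval) : pr (s : ℝ) = s := Set.projIcc_val zero_le_one s

lemma pr_nonpos {r : ℝ} (h : r ≤ 0) : pr r = 0 := by
  apply Subtype.ext
  have := Set.projIcc_of_le_left (α := ℝ) (a := 0) (b := 1) zero_le_one h
  rw [pr, this]
  rfl

lemma pr_zero : pr 0 = 0 := pr_nonpos le_rfl

variable {W : Type} [TopologicalSpace W]

/-- Evaluation at `0` on the free path space. -/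
def ev0 (W : Type) [TopologicalSpace W] : C(C(unitInterval, W), W) :=
  ⟨fun γ => γ 0, ContinuousEvalConst.continuous_eval_const 0⟩

lemma ev0_serre (W : Type) [TopologicalSpace W] : IsSerreFibration (⇑(ev0 W)) := by
  intro n H g hyp
  classical
  set Φ : ((Fin n → unitInterval) × unitInterval) × unitInterval → W := fun q =>
    if ((q.2 : ℝ)) ≤ ((q.1.2 : ℝ)) then H (q.1.1, pr ((q.1.2 : ℝ) - (q.2 : ℝ)))
    else (g q.1.1) (pr ((q.2 : ℝ) - (q.1.2 : ℝ))) with hΦdef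
  have hΦ : Continuous Φ := by
    apply Continuous.if_le
    · apply H.continuous.comp
      fun_prop
    · have hA : Continuous fun q : ((Fin n → unitInterval) × unitInterval) × unitInterval =>
          ((g q.1.1 : C(unitInterval, W)), pr ((q.2 : ℝ) - (q.1.2 : ℝ))) := by fun_prop
      exact ContinuousEval.continuous_eval.comp hA
    · fun_prop
    · fun_prop
    · intro q hq
      have h1 : (q.1.2 : ℝ) - (q.2 : ℝ) = 0 := by linarith
      have h2 : (q.2 : ℝ) - (q.1.2 : ℝ) = 0 := by linarith
      rw [h1, h2, pr_zero]
      exact (hyp q.1.1).symm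
  refine ⟨ContinuousMap.curry ⟨Φ, hΦ⟩, ?_, ?_⟩
  · intro x
    ext s
    show Φ ((x, 0), s) = g x s
    rw [hΦdef]
    by_cases hc : (s : ℝ) ≤ ((0 : unitInterval) : ℝ)
    · have hs0 : s = 0 := by
        apply Subtype.ext
        exact le_antisymm (by exact_mod_cast hc) s.2.1
      subst hs0
      beta_reduce
      rw [if_pos hc, sub_self, pr_zero]
      exact (hyp x).symm
    · beta_reduce
      rw [if_neg hc]
      have : (s : ℝ) - ((0 : unitInterval) : ℝ) = (s : ℝ) := by
        simp [unitInterval]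
      rw [this, pr_coe]
  · intro y
    show Φ ((y.1, y.2), 0) = H y
    rw [hΦdef]
    have hc : ((0 : unitInterval) : ℝ) ≤ (y.2 : ℝ) := y.2.2.1
    beta_reduce
    rw [if_pos hc]
    have : (y.2 : ℝ) - ((0 : unitInterval) : ℝ) = (y.2 : ℝ) := by simp [unitInterval]
    rw [this, pr_coe]

variable {n : ℕ}

/-- Distance (in the ambient Euclidean space) to the base point. -/
def dd (s₀ a : Sph n) : ℝ := ‖(a : EuclideanSpace ℝ (Fin (n + 1))) - (s₀ : EuclideanSpace ℝ (Fin (n + 1)))‖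

lemma norm_coe (a : Sph n) : ‖(a : EuclideanSpace ℝ (Fin (n + 1)))‖ = 1 :=
  mem_sphere_zero_iff_norm.mp a.2

lemma dd_nonneg (s₀ a : Sph n) : 0 ≤ dd s₀ a := norm_nonneg _

lemma dd_le_two (s₀ a : Sph n) : dd s₀ a ≤ 2 := by
  calc dd s₀ a ≤ ‖(a : EuclideanSpace ℝ (Fin (n + 1)))‖ + ‖(s₀ : EuclideanSpace ℝ (Fin (n + 1)))‖ :=
        norm_sub_le _ _
    _ = 2 := by rw [norm_coe, norm_coe]; norm_num

lemma dd_self (s₀ : Sph n) : dd s₀ s₀ = 0 := by simp [dd]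

@[fun_prop]
lemma continuous_dd (s₀ : Sph n) : Continuous (dd s₀) := by
  unfold dd; fun_prop

/-- The interpolation parameter for the partial contraction of the sphere. -/
def lam (s₀ a : Sph n) (t : ℝ) : ℝ :=
  min 1 (max 0 t / dd s₀ a) * min 1 (2 - dd s₀ a)

lemma lam_nonneg (s₀ a : Sph n) (t : ℝ) : 0 ≤ lam s₀ a t := by
  apply mul_nonneg
  · exact le_min zero_le_one (div_nonneg (le_max_left 0 t) (dd_nonneg s₀ a))
  · exact le_min zero_le_one (by linarith [dd_le_two s₀ a])

lemma lam_le_one (s₀ a : Sph n) (t : ℝ) : lam s₀ a t ≤ 1 := by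
  have h1 : min 1 (max 0 t / dd s₀ a) ≤ 1 := min_le_left _ _
  have h2 : min 1 (2 - dd s₀ a) ≤ 1 := min_le_left _ _
  have h1' : 0 ≤ min 1 (max 0 t / dd s₀ a) :=
    le_min zero_le_one (div_nonneg (le_max_left 0 t) (dd_nonneg s₀ a))
  have h2' : 0 ≤ min 1 (2 - dd s₀ a) := le_min zero_le_one (by linarith [dd_le_two s₀ a])
  have := mul_le_mul h1 h2 h2' zero_le_one
  rw [lam]
  linarith

lemma lam_le_sub (s₀ a : Sph n) (t : ℝ) : lam s₀ a t ≤ 2 - dd s₀ a := by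
  have h1 : min 1 (max 0 t / dd s₀ a) ≤ 1 := min_le_left _ _
  have h1' : 0 ≤ min 1 (max 0 t / dd s₀ a) :=
    le_min zero_le_one (div_nonneg (le_max_left 0 t) (dd_nonneg s₀ a))
  calc lam s₀ a t ≤ 1 * min 1 (2 - dd s₀ a) := by
        apply mul_le_mul_of_nonneg_right h1
        exact le_min zero_le_one (by linarith [dd_le_two s₀ a])
    _ = min 1 (2 - dd s₀ a) := one_mul _
    _ ≤ 2 - dd s₀ a := min_le_right _ _

/-- The straight-line interpolation vector. -/
def vec (s₀ a : Sph n) (t : ℝ) : EuclideanSpace ℝ (Fin (n + 1)) :=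
  (a : EuclideanSpace ℝ (Fin (n + 1))) +
    lam s₀ a t • ((s₀ : EuclideanSpace ℝ (Fin (n + 1))) - (a : EuclideanSpace ℝ (Fin (n + 1))))

lemma key_ineq {l d : ℝ} (h0 : 0 ≤ l) (h1 : l ≤ 1) (h2 : l ≤ 2 - d) (hd : 0 ≤ d) :
    l * (1 - l) * d ^ 2 < 1 := by
  rcases le_or_gt d 1.9 with hc | hc
  · nlinarith [mul_nonneg (sq_nonneg (2 * l - 1)) (sq_nonneg d), sq_nonneg d,
      mul_nonneg hd (by linarith : (0:ℝ) ≤ 1.9 - d)]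
  · have hdle : d ≤ 2 := by linarith
    have h3 : (0:ℝ) ≤ 2 - d := by linarith
    have h4 : (0:ℝ) ≤ 2 - d - l := by linarith
    nlinarith [sq_nonneg (l * d), mul_nonneg h4 (sq_nonneg d),
      mul_nonneg (sq_nonneg (2 - d)) (by linarith : (0:ℝ) ≤ 2 + d)]

lemma norm_vec_sq (s₀ a : Sph n) (t : ℝ) :
    ‖vec s₀ a t‖ ^ 2 = 1 - lam s₀ a t * (1 - lam s₀ a t) * dd s₀ a ^ 2 := by
  set l := lam s₀ a t with hldef
  set va : EuclideanSpace ℝ (Fin (n + 1)) := (a : EuclideanSpace ℝ (Fin (n + 1))) with hva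
  set vb : EuclideanSpace ℝ (Fin (n + 1)) := (s₀ : EuclideanSpace ℝ (Fin (n + 1))) with hvb
  have hna : ‖va‖ = 1 := norm_coe a
  have hnb : ‖vb‖ = 1 := norm_coe s₀
  have hln : 0 ≤ l := lam_nonneg s₀ a t
  have hd : dd s₀ a ^ 2 = ‖va‖ ^ 2 - 2 * inner ℝ va vb + ‖vb‖ ^ 2 := norm_sub_sq_real va vb
  have hinner : (inner ℝ va vb : ℝ) = 1 - dd s₀ a ^ 2 / 2 := by
    rw [hna, hnb] at hd; linarith
  have h1 : ‖vec s₀ a t‖ ^ 2 = ‖va‖ ^ 2 + 2 * inner ℝ va (l • (vb - va)) + ‖l • (vb - va)‖ ^ 2 :=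
    norm_add_sq_real va (l • (vb - va))
  have h2 : ‖l • (vb - va)‖ = l * dd s₀ a := by
    rw [norm_smul, Real.norm_eq_abs, abs_of_nonneg hln, norm_sub_rev]
    rfl
  have h3 : (inner ℝ va (l • (vb - va)) : ℝ) = l * (inner ℝ va vb - ‖va‖ ^ 2) := by
    rw [real_inner_smul_right, inner_sub_right, real_inner_self_eq_norm_sq]
  rw [h1, h2, h3, hinner, hna]
  ring

lemma norm_vec_pos (s₀ a : Sph n) (t : ℝ) : 0 < ‖vec s₀ a t‖ := by
  have h := norm_vec_sq s₀ a t
  have hk : lam s₀ a t * (1 - lam s₀ a t) * dd s₀ a ^ 2 < 1 :=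
    key_ineq (lam_nonneg s₀ a t) (lam_le_one s₀ a t) (lam_le_sub s₀ a t) (dd_nonneg s₀ a)
  have : 0 < ‖vec s₀ a t‖ ^ 2 := by rw [h]; linarith
  nlinarith [norm_nonneg (vec s₀ a t)]

/-- A partial contraction of the sphere towards the basepoint `s₀`. -/
def cc (s₀ : Sph n) (q : Sph n × ℝ) : Sph n :=
  ⟨‖vec s₀ q.1 q.2‖⁻¹ • vec s₀ q.1 q.2, by
    rw [mem_sphere_zero_iff_norm, norm_smul, Real.norm_eq_abs,
      abs_of_nonneg (inv_nonneg.mpr (norm_nonneg _))]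
    field_simp [(norm_vec_pos s₀ q.1 q.2).ne']⟩

@[fun_prop]
lemma continuous_cc (s₀ : Sph n) : Continuous (cc s₀) := by
  have hw : Continuous (fun q : Sph n × ℝ => lam s₀ q.1 q.2 •
      ((s₀ : EuclideanSpace ℝ (Fin (n + 1))) - (q.1 : EuclideanSpace ℝ (Fin (n + 1))))) := by
    rw [continuous_iff_continuousAt]
    intro q₀
    by_cases h0 : dd s₀ q₀.1 = 0
    · have hval : lam s₀ q₀.1 q₀.2 •
          ((s₀ : EuclideanSpace ℝ (Fin (n + 1))) - (q₀.1 : EuclideanSpace ℝ (Fin (n + 1)))) = 0 := by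
        have : (s₀ : EuclideanSpace ℝ (Fin (n + 1))) - (q₀.1 : EuclideanSpace ℝ (Fin (n + 1))) = 0 := by
          have := norm_eq_zero.mp h0
          rw [sub_eq_zero] at this ⊢
          rw [this]
        rw [this, smul_zero]
      unfold ContinuousAt
      beta_reduce
      rw [hval]
      apply squeeze_zero_norm (a := fun q : Sph n × ℝ => dd s₀ q.1)
      · intro q
        rw [norm_smul, Real.norm_eq_abs, abs_of_nonneg (lam_nonneg s₀ q.1 q.2), norm_sub_rev]
        calc lam s₀ q.1 q.2 * dd s₀ q.1 ≤ 1 * dd s₀ q.1 :=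
              mul_le_mul_of_nonneg_right (lam_le_one s₀ q.1 q.2) (dd_nonneg s₀ q.1)
          _ = dd s₀ q.1 := one_mul _
      · have hc : Continuous fun q : Sph n × ℝ => dd s₀ q.1 :=
          (continuous_dd s₀).comp continuous_fst
        exact hc.tendsto' q₀ 0 h0
    · have hdc : Continuous fun q : Sph n × ℝ => dd s₀ q.1 :=
        (continuous_dd s₀).comp continuous_fst
      have hmax : Continuous fun q : Sph n × ℝ => max 0 q.2 := by fun_prop
      have hlam : ContinuousAt (fun q : Sph n × ℝ => lam s₀ q.1 q.2) q₀ := by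
        simp only [lam]
        apply ContinuousAt.mul
        · exact ContinuousAt.inf continuousAt_const
            (ContinuousAt.div hmax.continuousAt hdc.continuousAt h0)
        · exact ContinuousAt.inf continuousAt_const
            (ContinuousAt.sub continuousAt_const hdc.continuousAt)
      have hsub : Continuous fun q : Sph n × ℝ =>
          ((s₀ : EuclideanSpace ℝ (Fin (n + 1))) - (q.1 : EuclideanSpace ℝ (Fin (n + 1)))) := by
        fun_prop
      exact hlam.smul hsub.continuousAt
  have hv : Continuous (fun q : Sph n × ℝ => vec s₀ q.1 q.2) := by
    unfold vec
    exact ((continuous_subtype_val.comp continuous_fst)).add hw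
  apply Continuous.subtype_mk
  exact ((hv.norm).inv₀ fun q => (norm_vec_pos s₀ q.1 q.2).ne').smul hv

lemma cc_nonpos {s₀ a : Sph n} {t : ℝ} (h : t ≤ 0) : cc s₀ (a, t) = a := by
  have hlam : lam s₀ a t = 0 := by
    rw [lam, max_eq_left h, zero_div, min_eq_right zero_le_one, zero_mul]
  apply Subtype.ext
  show ‖vec s₀ a t‖⁻¹ • vec s₀ a t = _
  rw [vec, hlam, zero_smul, add_zero, norm_coe, inv_one, one_smul]

lemma cc_zero (s₀ a : Sph n) : cc s₀ (a, 0) = a := cc_nonpos le_rfl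

lemma cc_base {s₀ a : Sph n} {t : ℝ} (h1 : dd s₀ a ≤ 1) (h2 : dd s₀ a ≤ t) :
    cc s₀ (a, t) = s₀ := by
  by_cases h0 : dd s₀ a = 0
  · have hlam : lam s₀ a t = 0 := by
      rw [lam, h0, div_zero, min_eq_right zero_le_one, zero_mul]
    apply Subtype.ext
    show ‖vec s₀ a t‖⁻¹ • vec s₀ a t = _
    have hav : (a : EuclideanSpace ℝ (Fin (n + 1))) = (s₀ : EuclideanSpace ℝ (Fin (n + 1))) := by
      have := norm_eq_zero.mp h0
      rwa [sub_eq_zero] at this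
    rw [vec, hlam, zero_smul, add_zero, hav, norm_coe, inv_one, one_smul]
  · have hdpos : 0 < dd s₀ a := lt_of_le_of_ne (dd_nonneg s₀ a) (Ne.symm h0)
    have htpos : 0 < t := lt_of_lt_of_le hdpos h2
    have hlam : lam s₀ a t = 1 := by
      rw [lam, max_eq_right htpos.le, min_eq_left ((one_le_div hdpos).mpr h2),
        min_eq_left (by linarith), one_mul]
    apply Subtype.ext
    show ‖vec s₀ a t‖⁻¹ • vec s₀ a t = _
    rw [vec, hlam, one_smul, add_sub_cancel, norm_coe, inv_one, one_smul]

lemma cc_self (s₀ : Sph n) (t : ℝ) : cc s₀ (s₀, t) = s₀ := by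
  rcases le_or_gt t 0 with h | h
  · exact cc_nonpos h
  · exact cc_base (by rw [dd_self]; norm_num) (by rw [dd_self]; exact h.le)

section Hstd

variable {n : ℕ} {W : Type} [TopologicalSpace W]

/-- The standard lift of a sphere map through `ev0`, with prescribed value at the
basepoint. -/
def hstdF (s₀ : Sph n) (g : C(Sph n, W)) (γ : C(unitInterval, W)) :
    Sph n × unitInterval → W := fun q =>
  if (q.2 : ℝ) ≤ dd s₀ q.1 then g (cc s₀ (q.1, (q.2 : ℝ)))
  else γ (pr ((q.2 : ℝ) - dd s₀ q.1))

lemma hstdF_cont (s₀ : Sph n) (g : C(Sph n, W)) (γ : C(unitInterval, W))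
    (hg : g s₀ = γ 0) : Continuous (hstdF s₀ g γ) := by
  apply Continuous.if_le
  · apply g.continuous.comp ((continuous_cc s₀).comp ?_)
    fun_prop
  · apply γ.continuous.comp (continuous_pr.comp ?_)
    fun_prop
  · fun_prop
  · fun_prop
  · intro q hq
    have hc : cc s₀ (q.1, (q.2 : ℝ)) = s₀ :=
      cc_base (by rw [← hq]; exact q.2.2.2) (le_of_eq hq.symm)
    rw [hc, hq, sub_self, pr_zero, hg]

/-- The standard lift as a continuous map. -/
def hstd (s₀ : Sph n) (g : C(Sph n, W)) (γ : C(unitInterval, W)) (hg : g s₀ = γ 0) :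
    C(Sph n, C(unitInterval, W)) :=
  ContinuousMap.curry ⟨hstdF s₀ g γ, hstdF_cont s₀ g γ hg⟩

lemma hstd_at_base (s₀ : Sph n) (g : C(Sph n, W)) (γ : C(unitInterval, W))
    (hg : g s₀ = γ 0) : hstd s₀ g γ hg s₀ = γ := by
  ext s
  show hstdF s₀ g γ (s₀, s) = γ s
  rw [hstdF]
  by_cases hc : (s : ℝ) ≤ dd s₀ s₀
  · rw [if_pos hc]
    rw [dd_self] at hc
    have hs0 : s = 0 := Subtype.ext (le_antisymm hc s.2.1)
    subst hs0
    have : ((0 : unitInterval) : ℝ) = 0 := rfl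
    rw [this, cc_zero, hg]
  · rw [if_neg hc, dd_self, sub_zero, pr_coe]

lemma hstd_ev (s₀ : Sph n) (g : C(Sph n, W)) (γ : C(unitInterval, W))
    (hg : g s₀ = γ 0) (a : Sph n) : hstd s₀ g γ hg a 0 = g a := by
  show hstdF s₀ g γ (a, 0) = g a
  rw [hstdF]
  have hc : ((0 : unitInterval) : ℝ) ≤ dd s₀ a := dd_nonneg s₀ a
  rw [if_pos hc]
  have : ((0 : unitInterval) : ℝ) = 0 := rfl
  rw [this, cc_zero]

/-- Any lift is homotopic rel basepoint to the standard lift of its projection. -/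
lemma drag_homotopicRel (s₀ : Sph n) (h : C(Sph n, C(unitInterval, W)))
    (γ : C(unitInterval, W)) (hγ : h s₀ = γ)
    (hg : ((ev0 W).comp h) s₀ = γ 0) :
    h.HomotopicRel (hstd s₀ ((ev0 W).comp h) γ hg) {s₀} := by
  set D : (unitInterval × Sph n) × unitInterval → W := fun q =>
    (h (cc s₀ (q.1.2, min (q.2 : ℝ) ((q.1.1 : ℝ) * dd s₀ q.1.2))))
      (pr ((q.2 : ℝ) - (q.1.1 : ℝ) * dd s₀ q.1.2)) with hDdef
  have hD : Continuous D := by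
    have hA : Continuous fun q : (unitInterval × Sph n) × unitInterval =>
        ((h (cc s₀ (q.1.2, min (q.2 : ℝ) ((q.1.1 : ℝ) * dd s₀ q.1.2))) : C(unitInterval, W)),
          pr ((q.2 : ℝ) - (q.1.1 : ℝ) * dd s₀ q.1.2)) := by
      apply Continuous.prodMk
      · exact h.continuous.comp ((continuous_cc s₀).comp (by fun_prop))
      · exact continuous_pr.comp (by fun_prop)
    exact ContinuousEval.continuous_eval.comp hA
  refine ⟨{ toFun := (ContinuousMap.curry ⟨D, hD⟩ : C(unitInterval × Sph n, C(unitInterval, W))),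
            map_zero_left := ?_, map_one_left := ?_, prop' := ?_ }⟩
  · intro a
    ext s
    show D ((0, a), s) = h a s
    rw [hDdef]
    beta_reduce
    have h0 : ((0 : unitInterval) : ℝ) = 0 := rfl
    rw [h0, zero_mul, min_eq_right s.2.1, cc_zero, sub_zero, pr_coe]
  · intro a
    ext s
    show D ((1, a), s) = hstdF s₀ ((ev0 W).comp h) γ (a, s)
    rw [hDdef, hstdF]
    beta_reduce
    have h1 : ((1 : unitInterval) : ℝ) = 1 := rfl
    rw [h1, one_mul]
    by_cases hc : (s : ℝ) ≤ dd s₀ a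
    · rw [if_pos hc, min_eq_left hc, pr_nonpos (by linarith)]
      rfl
    · push_neg at hc
      rw [if_neg (not_le.mpr hc), min_eq_right hc.le,
        cc_base (le_trans hc.le s.2.2) le_rfl, hγ]
  · intro t a ha
    have ha' : a = s₀ := ha
    ext s
    show D ((t, a), s) = h a s
    rw [ha', hDdef]
    beta_reduce
    rw [dd_self, mul_zero, min_eq_right s.2.1, cc_zero, sub_zero, pr_coe]

/-- Standard lifts of rel-homotopic maps are rel-homotopic. -/
lemma mid_homotopicRel (s₀ : Sph n) (g₁ g₂ : C(Sph n, W)) (γ : C(unitInterval, W))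
    (hg₁ : g₁ s₀ = γ 0) (hg₂ : g₂ s₀ = γ 0)
    (hK : g₁.HomotopicRel g₂ {s₀}) :
    (hstd s₀ g₁ γ hg₁).HomotopicRel (hstd s₀ g₂ γ hg₂) {s₀} := by
  obtain ⟨K⟩ := hK
  set D : (unitInterval × Sph n) × unitInterval → W := fun q =>
    if (q.2 : ℝ) ≤ dd s₀ q.1.2 then K (q.1.1, cc s₀ (q.1.2, (q.2 : ℝ)))
    else γ (pr ((q.2 : ℝ) - dd s₀ q.1.2)) with hDdef
  have hD : Continuous D := by
    apply Continuous.if_le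
    · apply K.continuous.comp
      apply Continuous.prodMk (by fun_prop)
      exact (continuous_cc s₀).comp (by fun_prop)
    · exact γ.continuous.comp (continuous_pr.comp (by fun_prop))
    · fun_prop
    · fun_prop
    · intro q hq
      have hc : cc s₀ (q.1.2, (q.2 : ℝ)) = s₀ :=
        cc_base (by rw [← hq]; exact q.2.2.2) (le_of_eq hq.symm)
      rw [hc, hq, sub_self, pr_zero]
      rw [K.eq_fst q.1.1 (Set.mem_singleton s₀), hg₁]
  refine ⟨{ toFun := (ContinuousMap.curry ⟨D, hD⟩ : C(unitInterval × Sph n, C(unitInterval, W))),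
            map_zero_left := ?_, map_one_left := ?_, prop' := ?_ }⟩
  · intro a
    ext s
    show D ((0, a), s) = hstdF s₀ g₁ γ (a, s)
    rw [hDdef, hstdF]
    beta_reduce
    by_cases hc : (s : ℝ) ≤ dd s₀ a
    · rw [if_pos hc, if_pos hc, K.apply_zero]
    · rw [if_neg hc, if_neg hc]
  · intro a
    ext s
    show D ((1, a), s) = hstdF s₀ g₂ γ (a, s)
    rw [hDdef, hstdF]
    beta_reduce
    by_cases hc : (s : ℝ) ≤ dd s₀ a
    · rw [if_pos hc, if_pos hc, K.apply_one]
    · rw [if_neg hc, if_neg hc]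
  · intro t a ha
    have ha' : a = s₀ := ha
    ext s
    show D ((t, a), s) = hstd s₀ g₁ γ hg₁ a s
    rw [ha', hstd_at_base, hDdef]
    beta_reduce
    by_cases hc : (s : ℝ) ≤ dd s₀ s₀
    · rw [if_pos hc]
      rw [dd_self] at hc
      have hs0 : s = 0 := Subtype.ext (le_antisymm hc s.2.1)
      subst hs0
      have h0 : ((0 : unitInterval) : ℝ) = 0 := rfl
      rw [h0, cc_zero]
      rw [K.eq_fst t (Set.mem_singleton s₀), hg₁]
    · rw [if_neg hc, dd_self, sub_zero, pr_coe]

end Hstd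

section JoinedPart

variable {W : Type} [TopologicalSpace W]

/-- The path shrinking a free path to the constant path at its start point. -/
def shrinkPath (γ : C(unitInterval, W)) :
    Path γ ((ContinuousMap.const' : C(W, C(unitInterval, W))) (γ 0)) where
  toContinuousMap := ContinuousMap.curry
    ⟨fun q : unitInterval × unitInterval => γ (pr ((q.2 : ℝ) * (1 - (q.1 : ℝ)))),
      γ.continuous.comp (continuous_pr.comp (by fun_prop))⟩
  source' := by
    ext s
    show γ (pr ((s : ℝ) * (1 - ((0 : unitInterval) : ℝ)))) = γ s
    have h0 : ((0 : unitInterval) : ℝ) = 0 := rfl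
    rw [h0]
    norm_num
    rw [pr_coe]
  target' := by
    ext s
    show γ (pr ((s : ℝ) * (1 - ((1 : unitInterval) : ℝ)))) = _
    have h1 : ((1 : unitInterval) : ℝ) = 1 := rfl
    rw [h1]
    norm_num
    rw [pr_zero]

lemma joined_shrink (γ : C(unitInterval, W)) :
    Joined γ ((ContinuousMap.const' : C(W, C(unitInterval, W))) (γ 0)) :=
  ⟨shrinkPath γ⟩

lemma ev0_weq (W : Type) [TopologicalSpace W] : IsWeakHomotopyEquiv (ev0 W) := by
  refine ⟨?_, ?_, ?_⟩
  · intro w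
    exact ⟨(ContinuousMap.const' : C(W, C(unitInterval, W))) w, Joined.refl w⟩
  · intro γ δ hJ
    have h2 : Joined ((ContinuousMap.const' : C(W, C(unitInterval, W))) (γ 0))
        ((ContinuousMap.const' : C(W, C(unitInterval, W))) (δ 0)) := by
      obtain ⟨ω⟩ := hJ
      exact ⟨ω.map (ContinuousMap.const' : C(W, C(unitInterval, W))).continuous⟩
    exact (joined_shrink γ).trans (h2.trans (joined_shrink δ).symm)
  · intro n s₀ x
    constructor
    · intro g hg
      refine ⟨hstd s₀ g x hg, hstd_at_base s₀ g x hg, ?_⟩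
      have heq : (ev0 W).comp (hstd s₀ g x hg) = g := by
        ext a
        exact hstd_ev s₀ g x hg a
      rw [heq]
      exact ContinuousMap.HomotopicRel.refl g
    · intro h₁ h₂ e₁ e₂ hK
      have hg₁ : ((ev0 W).comp h₁) s₀ = x 0 := by show h₁ s₀ 0 = x 0; rw [e₁]
      have hg₂ : ((ev0 W).comp h₂) s₀ = x 0 := by show h₂ s₀ 0 = x 0; rw [e₂]
      have d₁ := drag_homotopicRel s₀ h₁ x e₁ hg₁
      have d₂ := drag_homotopicRel s₀ h₂ x e₂ hg₂
      have m := mid_homotopicRel s₀ ((ev0 W).comp h₁) ((ev0 W).comp h₂) x hg₁ hg₂ hK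
      exact d₁.trans (m.trans d₂.symm)

end JoinedPart

end SerreAux
end SerreAux

open SerreAux

/-- For a cofibration `j : X → Y` of pointed compact Hausdorff spaces (a map with the
left lifting property against acyclic Serre fibrations) and any pointed space `Z`,
precomposition `j* : C_*(Y,Z) → C_*(X,Z)` between pointed mapping spaces with the
compact-open topology is a Serre fibration. -/
theorem pointed_precomp_serre_fibration {X Y Z : Type}
    [TopologicalSpace X] [CompactSpace X] [T2Space X]
    [TopologicalSpace Y] [CompactSpace Y] [T2Space Y] [TopologicalSpace Z]
    (x₀ : X) (y₀ : Y) (z₀ : Z) (j : C(X, Y)) (hj : j x₀ = y₀)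
    (hcof : ∀ (E B' : Type) [TopologicalSpace E] [TopologicalSpace B'] (p : C(E, B')),
      IsSerreFibration ⇑p → IsWeakHomotopyEquiv p →
      ∀ (u : C(X, E)) (v : C(Y, B')), (∀ x, p (u x) = v (j x)) →
        ∃ l : C(Y, E), (∀ x, l (j x) = u x) ∧ ∀ y, p (l y) = v y) :
    ∀ F : {f : C(Y, Z) // f y₀ = z₀} → {f : C(X, Z) // f x₀ = z₀},
      (∀ f x, (F f).1 x = f.1 (j x)) → Continuous F ∧ IsSerreFibration F := by
  intro F hF
  constructor
  · have hFeq : F = fun f => (⟨f.1.comp j, by rw [ContinuousMap.comp_apply, hj]; exact f.2⟩ :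
        {f : C(X, Z) // f x₀ = z₀}) := by
      funext f
      apply Subtype.ext
      ext x
      exact hF f x
    rw [hFeq]
    exact ((ContinuousMap.continuous_precomp j).comp continuous_subtype_val).subtype_mk _
  · intro n H g hyp
    let HH : C((Fin n → unitInterval) × unitInterval, C(X, Z)) :=
      ⟨fun qt => (H qt).1, continuous_subtype_val.comp H.continuous⟩
    let B : C(((Fin n → unitInterval) × unitInterval) × X, Z) := HH.uncurry
    let r1 : C((X × unitInterval) × (Fin n → unitInterval),
        ((Fin n → unitInterval) × unitInterval) × X) :=
      ⟨fun p => ((p.2, p.1.2), p.1.1), by fun_prop⟩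
    let u : C(X, C(unitInterval, C(Fin n → unitInterval, Z))) :=
      ContinuousMap.curry (ContinuousMap.curry (B.comp r1))
    let gg : C(Fin n → unitInterval, C(Y, Z)) :=
      ⟨fun q => (g q).1, continuous_subtype_val.comp g.continuous⟩
    let r2 : C(Y × (Fin n → unitInterval), (Fin n → unitInterval) × Y) :=
      ⟨fun p => (p.2, p.1), by fun_prop⟩
    let v : C(Y, C(Fin n → unitInterval, Z)) := ContinuousMap.curry (gg.uncurry.comp r2)
    have compat : ∀ x, (ev0 (C(Fin n → unitInterval, Z))) (u x) = v (j x) := by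
      intro x
      ext q
      show (H (q, 0)).1 x = (g q).1 (j x)
      rw [← hyp q]
      exact hF (g q) x
    obtain ⟨l, hl1, hl2⟩ := hcof (C(unitInterval, C(Fin n → unitInterval, Z)))
      (C(Fin n → unitInterval, Z)) (ev0 _) (ev0_serre _) (ev0_weq _) u v compat
    let L : C((Y × unitInterval) × (Fin n → unitInterval), Z) := l.uncurry.uncurry
    let r3 : C(((Fin n → unitInterval) × unitInterval) × Y,
        (Y × unitInterval) × (Fin n → unitInterval)) :=
      ⟨fun p => ((p.2, p.1.2), p.1.1), by fun_prop⟩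
    let G0 : C((Fin n → unitInterval) × unitInterval, C(Y, Z)) :=
      ContinuousMap.curry (L.comp r3)
    have bp : ∀ qt, G0 qt y₀ = z₀ := by
      intro qt
      show l y₀ qt.2 qt.1 = z₀
      have hly : l y₀ = u x₀ := by rw [← hj]; exact hl1 x₀
      rw [hly]
      exact (H (qt.1, qt.2)).2
    refine ⟨⟨fun qt => ⟨G0 qt, bp qt⟩, G0.continuous.subtype_mk _⟩, ?_, ?_⟩
    · intro q
      apply Subtype.ext
      ext y
      show l y 0 q = (g q).1 y
      have h2 : l y 0 = v y := hl2 y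
      rw [h2]
      rfl
    · intro qt
      apply Subtype.ext
      ext x
      show (F _).1 x = (H qt).1 x
      rw [hF]
      show l (j x) qt.2 qt.1 = (H qt).1 x
      rw [hl1 x]
      rfl
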